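/- Every f^[α] ∈ I^[Σ] with s(α) ≺ σ s-reduces to zero by G^[Σ] if and only if every nonzero f^[α] ∈ I^[Σ] with s(α) ≺ σ is top s-reducible by G^[Σ]. (Equivalent characterization of labelled Gröbner bases up to a signature.) -/

import Mathlib

open Finsupp

/-- The free algebra `K⟨X⟩`, realized as the monoid algebra of the free monoid. -/
abbrev FreeAlg (K X : Type*) [Field K] := MonoidAlgebra K (FreeMonoid X)

/-- Module monomials `a εᵢ b` of the free bimodule of rank `r`. -/
structure MonMod (X : Type*) (r : ℕ) where
  left : FreeMonoid X
  idx : Fin r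
  right : FreeMonoid X

/-- The free bimodule `Σ = (K⟨X⟩ ⊗ K⟨X⟩)^r`, realized as the span of module monomials. -/
abbrev FreeBimod (K X : Type*) [Field K] (r : ℕ) := MonMod X r →₀ K

/-- Two-sided action of a pair of words on a module monomial: `a·(c εᵢ d)·b = (ac) εᵢ (db)`. -/
def act {X : Type*} {r : ℕ} (a b : FreeMonoid X) (μ : MonMod X r) : MonMod X r :=
  ⟨a * μ.left, μ.idx, μ.right * b⟩

/-- The monomial `w` as an element of the free algebra. -/
noncomputable def mon (K : Type*) [Field K] {X : Type*} (w : FreeMonoid X) : FreeAlg K X :=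
  MonoidAlgebra.of K (FreeMonoid X) w

/-- The evaluation homomorphism `Σ → K⟨X⟩`, `εᵢ ↦ fᵢ`. -/
noncomputable def evalS {K X : Type*} [Field K] {r : ℕ} (F : Fin r → FreeAlg K X)
    (α : FreeBimod K X r) : FreeAlg K X :=
  α.sum fun μ c => c • (mon K μ.left * F μ.idx * mon K μ.right)

section Orders

variable {K X : Type*} [Field K] [LinearOrder (FreeMonoid X)] {r : ℕ}
  [LinearOrder (MonMod X r)]

/-- The signature of a module element: the largest module monomial of its support
(`⊥` for the zero element). -/
noncomputable def sigW (α : FreeBimod K X r) : WithBot (MonMod X r) := α.support.max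

/-- The leading monomial of a nonzero polynomial (junk value `1` for `0`). -/
noncomputable def lmon (p : FreeAlg K X) : FreeMonoid X :=
  if h : p.coeff.support.Nonempty then p.coeff.support.max' h else 1

/-- The leading coefficient. -/
noncomputable def lcoeff (p : FreeAlg K X) : K := p.coeff (lmon p)

/-- The leading term. -/
noncomputable def lterm (p : FreeAlg K X) : FreeAlg K X :=
  MonoidAlgebra.single (lmon p) (lcoeff p)

/-- `f^[α]` is top s-reducible by the set `G^[Σ]`. -/
def TopSRed (G : Set (FreeAlg K X × FreeBimod K X r)) (f : FreeAlg K X)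
    (α : FreeBimod K X r) : Prop :=
  ∃ g γ, (g, γ) ∈ G ∧ g ≠ 0 ∧ ∃ a b : FreeMonoid X,
    a * lmon g * b = lmon f ∧ WithBot.map (act a b) (sigW γ) ≤ sigW α

/-- `f^[α]` is singular top s-reducible by `G^[Σ]`. -/
def SingTopSRed (G : Set (FreeAlg K X × FreeBimod K X r)) (f : FreeAlg K X)
    (α : FreeBimod K X r) : Prop :=
  f ≠ 0 ∧ ∃ g γ, (g, γ) ∈ G ∧ g ≠ 0 ∧ ∃ a b : FreeMonoid X,
    a * lmon g * b = lmon f ∧ WithBot.map (act a b) (sigW γ) = sigW α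

/-- `f^[α]` admits a regular s-reduction by `G^[Σ]`. -/
def RegSRedible (G : Set (FreeAlg K X × FreeBimod K X r)) (f : FreeAlg K X)
    (α : FreeBimod K X r) : Prop :=
  ∃ g γ, (g, γ) ∈ G ∧ g ≠ 0 ∧ ∃ a b : FreeMonoid X,
    a * lmon g * b ∈ f.coeff.support ∧ WithBot.map (act a b) (sigW γ) < sigW α

/-- `f^[α]` admits a regular *top* s-reduction by `G^[Σ]`. -/
def RegTopSRedible (G : Set (FreeAlg K X × FreeBimod K X r)) (f : FreeAlg K X)
    (α : FreeBimod K X r) : Prop :=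
  f ≠ 0 ∧ ∃ g γ, (g, γ) ∈ G ∧ g ≠ 0 ∧ ∃ a b : FreeMonoid X,
    a * lmon g * b = lmon f ∧ WithBot.map (act a b) (sigW γ) < sigW α

/-- Result of one s-reduction step of `f^[α]` by `a g^[γ] b`. -/
noncomputable def sredResult (f : FreeAlg K X) (α : FreeBimod K X r)
    (g : FreeAlg K X) (γ : FreeBimod K X r) (a b : FreeMonoid X) :
    FreeAlg K X × FreeBimod K X r :=
  (f - (f.coeff (a * lmon g * b) * (lcoeff g)⁻¹) • (mon K a * g * mon K b),
   α - (f.coeff (a * lmon g * b) * (lcoeff g)⁻¹) • Finsupp.mapDomain (act a b) γ)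

/-- One s-reduction step by `G^[Σ]`. -/
def SRedStep (G : Set (FreeAlg K X × FreeBimod K X r))
    (p q : FreeAlg K X × FreeBimod K X r) : Prop :=
  ∃ g γ, (g, γ) ∈ G ∧ g ≠ 0 ∧ ∃ a b : FreeMonoid X,
    a * lmon g * b ∈ p.1.coeff.support ∧ WithBot.map (act a b) (sigW γ) ≤ sigW p.2 ∧
    q = sredResult p.1 p.2 g γ a b

/-- One *regular* s-reduction step by `G^[Σ]`. -/
def RegSRedStep (G : Set (FreeAlg K X × FreeBimod K X r))
    (p q : FreeAlg K X × FreeBimod K X r) : Prop :=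
  ∃ g γ, (g, γ) ∈ G ∧ g ≠ 0 ∧ ∃ a b : FreeMonoid X,
    a * lmon g * b ∈ p.1.coeff.support ∧ WithBot.map (act a b) (sigW γ) < sigW p.2 ∧
    q = sredResult p.1 p.2 g γ a b

/-- `p` s-reduces to zero by `G^[Σ]`. -/
def SRedToZero (G : Set (FreeAlg K X × FreeBimod K X r))
    (p : FreeAlg K X × FreeBimod K X r) : Prop :=
  ∃ σ : FreeBimod K X r, Relation.ReflTransGen (SRedStep G) p (0, σ)

/-- `p` regular s-reduces to zero by `G^[Σ]`. -/
def RegSRedToZero (G : Set (FreeAlg K X × FreeBimod K X r))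
    (p : FreeAlg K X × FreeBimod K X r) : Prop :=
  ∃ σ : FreeBimod K X r, Relation.ReflTransGen (RegSRedStep G) p (0, σ)

/-- `G^[Σ] ⊆ I^[Σ]`: labelled polynomials with nonzero polynomial part. -/
def InLab (F : Fin r → FreeAlg K X) (G : Set (FreeAlg K X × FreeBimod K X r)) : Prop :=
  ∀ p ∈ G, p.1 = evalS F p.2 ∧ p.1 ≠ 0

/-- `G^[Σ]` is a labelled Gröbner basis of `I^[Σ]`. -/
def LabGB (F : Fin r → FreeAlg K X) (G : Set (FreeAlg K X × FreeBimod K X r)) : Prop :=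
  InLab F G ∧ ∀ (f : FreeAlg K X) (α : FreeBimod K X r), f = evalS F α → SRedToZero G (f, α)

/-- `G^[Σ]` is a labelled Gröbner basis of `I^[Σ]` up to signature `σ`. -/
def LabGBUpTo (F : Fin r → FreeAlg K X) (G : Set (FreeAlg K X × FreeBimod K X r))
    (σ : MonMod X r) : Prop :=
  InLab F G ∧ ∀ (f : FreeAlg K X) (α : FreeBimod K X r), f = evalS F α →
    sigW α < (σ : WithBot (MonMod X r)) → SRedToZero G (f, α)

/-- `G^[Σ]` is a *minimal* labelled Gröbner basis of `I^[Σ]`. -/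
def MinLabGB (F : Fin r → FreeAlg K X) (G : Set (FreeAlg K X × FreeBimod K X r)) : Prop :=
  LabGB F G ∧ ∀ p ∈ G, ¬ TopSRed (G \ {p}) p.1 p.2

end Orders

section AuxLemmas

variable {K X : Type*} [Field K] {r : ℕ}

lemma evalS_eq (F : Fin r → FreeAlg K X) (α : FreeBimod K X r) :
    evalS F α = Finsupp.linearCombination K
      (fun μ : MonMod X r => mon K μ.left * F μ.idx * mon K μ.right) α := by
  rw [Finsupp.linearCombination_apply]; rfl

lemma evalS_sub (F : Fin r → FreeAlg K X) (α β : FreeBimod K X r) :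
    evalS F (α - β) = evalS F α - evalS F β := by
  simp [evalS_eq]

lemma evalS_smul (F : Fin r → FreeAlg K X) (c : K) (α : FreeBimod K X r) :
    evalS F (c • α) = c • evalS F α := by
  simp [evalS_eq]

lemma mon_mul (a b : FreeMonoid X) : mon K (a * b) = mon K a * mon K b :=
  map_mul (MonoidAlgebra.of K (FreeMonoid X)) a b

lemma evalS_zero (F : Fin r → FreeAlg K X) : evalS F (0 : FreeBimod K X r) = 0 := by
  simp [evalS_eq]

lemma evalS_add (F : Fin r → FreeAlg K X) (α β : FreeBimod K X r) :
    evalS F (α + β) = evalS F α + evalS F β := by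
  simp [evalS_eq]

lemma evalS_single (F : Fin r → FreeAlg K X) (μ : MonMod X r) (c : K) :
    evalS F (Finsupp.single μ c) = c • (mon K μ.left * F μ.idx * mon K μ.right) :=
  Finsupp.sum_single_index (by simp)

lemma evalS_mapDomain (F : Fin r → FreeAlg K X) (a b : FreeMonoid X) (γ : FreeBimod K X r) :
    evalS F (Finsupp.mapDomain (act a b) γ) = mon K a * evalS F γ * mon K b := by
  induction γ using Finsupp.induction_linear with
  | zero => simp [evalS_zero]
  | add p q hp hq =>
    rw [Finsupp.mapDomain_add, evalS_add, evalS_add, hp, hq, mul_add, add_mul]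
  | single μ c =>
    rw [Finsupp.mapDomain_single, evalS_single, evalS_single]
    simp only [act, mon_mul, mul_smul_comm, smul_mul_assoc, mul_assoc]

lemma sub_apply' (p q : FreeAlg K X) (w : FreeMonoid X) :
    (p - q).coeff w = p.coeff w - q.coeff w :=
  Finsupp.sub_apply p.coeff q.coeff w

lemma smul_apply' (c : K) (p : FreeAlg K X) (w : FreeMonoid X) : (c • p).coeff w = c * p.coeff w :=
  Finsupp.smul_apply c p.coeff w

lemma mon_mul_poly_mul_mon (a b : FreeMonoid X) (g : FreeAlg K X) :
    (mon K a * g * mon K b).coeff = Finsupp.mapDomain (fun u => a * u * b) g.coeff := by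
  induction g using MonoidAlgebra.induction_linear with
  | zero => simp
  | add f g hf hg =>
    rw [mul_add, add_mul, MonoidAlgebra.coeff_add, MonoidAlgebra.coeff_add, hf, hg,
      Finsupp.mapDomain_add]
  | single u c =>
    show (mon K a * MonoidAlgebra.single u c * mon K b).coeff = _
    simp only [mon, MonoidAlgebra.of_apply, MonoidAlgebra.single_mul_single, one_mul, mul_one,
      MonoidAlgebra.coeff_single, Finsupp.mapDomain_single]

lemma conj_inj (a b : FreeMonoid X) : Function.Injective (fun u : FreeMonoid X => a * u * b) :=
  fun _ _ h => mul_left_cancel (mul_right_cancel h)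

lemma magb_apply (a b u : FreeMonoid X) (g : FreeAlg K X) :
    (mon K a * g * mon K b).coeff (a * u * b) = g.coeff u := by
  rw [mon_mul_poly_mul_mon, Finsupp.mapDomain_apply (conj_inj a b)]

lemma magb_support {a b t : FreeMonoid X} {g : FreeAlg K X}
    (ht : t ∈ (mon K a * g * mon K b).coeff.support) : ∃ u ∈ g.coeff.support, a * u * b = t := by
  classical
  rw [mon_mul_poly_mul_mon] at ht
  have h := Finsupp.mapDomain_support ht
  rcases Finset.mem_image.1 h with ⟨u, hu, hut⟩
  exact ⟨u, hu, hut⟩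

section Ord

variable [LinearOrder (FreeMonoid X)] [LinearOrder (MonMod X r)]

lemma lmon_mem {p : FreeAlg K X} (hp : p ≠ 0) : lmon p ∈ p.coeff.support := by
  rw [lmon, dif_pos (Finsupp.support_nonempty_iff.2 (by simpa using hp))]
  exact Finset.max'_mem _ _

lemma le_lmon {p : FreeAlg K X} {u : FreeMonoid X} (hu : u ∈ p.coeff.support) : u ≤ lmon p := by
  have h : p.coeff.support.Nonempty := ⟨u, hu⟩
  rw [lmon, dif_pos h]
  exact Finset.le_max' _ _ hu

lemma lcoeff_ne_zero {p : FreeAlg K X} (hp : p ≠ 0) : lcoeff p ≠ 0 := by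
  have h := lmon_mem hp
  rwa [Finsupp.mem_support_iff] at h

lemma sigW_le {α : FreeBimod K X r} {s : WithBot (MonMod X r)}
    (h : ∀ μ ∈ α.support, (μ : WithBot (MonMod X r)) ≤ s) : sigW α ≤ s :=
  Finset.max_le h

lemma mem_le_sigW {α : FreeBimod K X r} {μ : MonMod X r} (h : μ ∈ α.support) :
    (μ : WithBot (MonMod X r)) ≤ sigW α :=
  Finset.le_max h

lemma sigW_sub_le {α β : FreeBimod K X r} {s : WithBot (MonMod X r)}
    (h1 : sigW α ≤ s) (h2 : sigW β ≤ s) : sigW (α - β) ≤ s := by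
  classical
  refine sigW_le fun μ hμ => ?_
  rcases Finset.mem_union.1 (Finsupp.support_sub hμ) with h | h
  · exact le_trans (mem_le_sigW h) h1
  · exact le_trans (mem_le_sigW h) h2

lemma sigW_smul_le (c : K) (β : FreeBimod K X r) : sigW (c • β) ≤ sigW β :=
  Finset.max_mono Finsupp.support_smul

lemma sigW_mapDomain_le
    (hmod : ∀ (a b : FreeMonoid X) (μ ν : MonMod X r), μ ≤ ν → act a b μ ≤ act a b ν)
    (a b : FreeMonoid X) (γ : FreeBimod K X r) :
    sigW (Finsupp.mapDomain (act a b) γ) ≤ WithBot.map (act a b) (sigW γ) := by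
  classical
  refine sigW_le fun μ hμ => ?_
  rcases Finset.mem_image.1 (Finsupp.mapDomain_support hμ) with ⟨ν, hν, rfl⟩
  have hne : γ.support.Nonempty := ⟨ν, hν⟩
  have hmax : sigW γ = ((γ.support.max' hne : MonMod X r) : WithBot (MonMod X r)) :=
    (Finset.coe_max' hne).symm
  rw [hmax, WithBot.map_coe, WithBot.coe_le_coe]
  exact hmod a b _ _ (Finset.le_max' _ _ hν)

lemma sredResult_eval (F : Fin r → FreeAlg K X) {f : FreeAlg K X} {α : FreeBimod K X r}
    {g : FreeAlg K X} {γ : FreeBimod K X r} (a b : FreeMonoid X)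
    (hf : f = evalS F α) (hg : g = evalS F γ) :
    (sredResult f α g γ a b).1 = evalS F (sredResult f α g γ a b).2 := by
  simp only [sredResult]
  rw [evalS_sub, evalS_smul, evalS_mapDomain, ← hg, ← hf]

lemma sredResult_sig
    (hmod : ∀ (a b : FreeMonoid X) (μ ν : MonMod X r), μ ≤ ν → act a b μ ≤ act a b ν)
    {α γ : FreeBimod K X r} {a b : FreeMonoid X}
    (h : WithBot.map (act a b) (sigW γ) ≤ sigW α) (f g : FreeAlg K X) :
    sigW (sredResult f α g γ a b).2 ≤ sigW α :=
  sigW_sub_le le_rfl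
    (le_trans (le_trans (sigW_smul_le _ _) (sigW_mapDomain_le hmod a b γ)) h)

lemma sredResult_supp
    (hmon : ∀ a b u v : FreeMonoid X, u ≤ v → a * u * b ≤ a * v * b)
    {f g : FreeAlg K X} {a b w : FreeMonoid X}
    (hw : ∀ u ∈ f.coeff.support, u ≤ w) (ht : a * lmon g * b ≤ w) (α γ : FreeBimod K X r) :
    ∀ u ∈ (sredResult f α g γ a b).1.coeff.support, u ≤ w := by
  classical
  intro u hu
  simp only [sredResult, MonoidAlgebra.coeff_sub, MonoidAlgebra.coeff_smul] at hu
  rcases Finset.mem_union.1 (Finsupp.support_sub hu) with h | h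
  · exact hw u h
  · have h' : u ∈ (mon K a * g * mon K b).coeff.support := Finsupp.support_smul h
    rcases magb_support h' with ⟨v, hv, rfl⟩
    exact le_trans (hmon a b _ _ (le_lmon hv)) ht

lemma sredResult_coeff_eq
    (hmon : ∀ a b u v : FreeMonoid X, u ≤ v → a * u * b ≤ a * v * b)
    {f g : FreeAlg K X} {a b w : FreeMonoid X}
    (hlt : a * lmon g * b < w) (α : FreeBimod K X r) (γ : FreeBimod K X r) :
    (sredResult f α g γ a b).1.coeff w = f.coeff w := by
  classical
  have h0 : (mon K a * g * mon K b).coeff w = 0 := by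
    by_contra h
    rcases magb_support (Finsupp.mem_support_iff.2 h) with ⟨v, hv, rfl⟩
    exact absurd (hmon a b _ _ (le_lmon hv)) (not_le.2 hlt)
  show (f - (f.coeff (a * lmon g * b) * (lcoeff g)⁻¹) • (mon K a * g * mon K b)).coeff w = f.coeff w
  rw [sub_apply', smul_apply', h0, mul_zero, sub_zero]

lemma sredResult_top
    (hmon : ∀ a b u v : FreeMonoid X, u ≤ v → a * u * b ≤ a * v * b)
    {f g : FreeAlg K X} {a b : FreeMonoid X} (hg : g ≠ 0) (hf : f ≠ 0)
    (htop : a * lmon g * b = lmon f) (α : FreeBimod K X r) (γ : FreeBimod K X r) :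
    ∀ u ∈ (sredResult f α g γ a b).1.coeff.support, u < lmon f := by
  intro u hu
  have hle : u ≤ lmon f :=
    sredResult_supp hmon (fun v hv => le_lmon hv) (le_of_eq htop) α γ u hu
  rcases lt_or_eq_of_le hle with h | h
  · exact h
  · exfalso
    have h0 : (sredResult f α g γ a b).1.coeff (lmon f) = 0 := by
      show (f - (f.coeff (a * lmon g * b) * (lcoeff g)⁻¹) • (mon K a * g * mon K b)).coeff (lmon f) = 0
      rw [sub_apply', smul_apply', ← htop, magb_apply,
        show g.coeff (lmon g) = lcoeff g from rfl,
        mul_assoc _ (lcoeff g)⁻¹ (lcoeff g),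
        inv_mul_cancel₀ (lcoeff_ne_zero hg), mul_one, sub_self]
    rw [h] at hu
    exact Finsupp.mem_support_iff.1 hu h0

end Ord

end AuxLemmas

/-- **Equivalent characterization of labelled Gröbner bases up to a signature.**
Every `f^[α] ∈ I^[Σ]` with `s(α) ≺ σ` s-reduces to zero by `G^[Σ]` iff every nonzero
`f^[α] ∈ I^[Σ]` with `s(α) ≺ σ` is top s-reducible by `G^[Σ]`. -/
theorem labGB_upto_iff_topSRed {K X : Type*} [Field K] {r : ℕ}
    [LinearOrder (FreeMonoid X)] [WellFoundedLT (FreeMonoid X)]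
    [LinearOrder (MonMod X r)] [WellFoundedLT (MonMod X r)]
    (hmon : ∀ a b u v : FreeMonoid X, u ≤ v → a * u * b ≤ a * v * b)
    (hmod : ∀ (a b : FreeMonoid X) (μ ν : MonMod X r), μ ≤ ν → act a b μ ≤ act a b ν)
    (hcomp : ∀ (u v : FreeMonoid X) (i : Fin r),
      (u ≤ v ↔ (⟨u, i, 1⟩ : MonMod X r) ≤ ⟨v, i, 1⟩) ∧
      (u ≤ v ↔ (⟨1, i, u⟩ : MonMod X r) ≤ ⟨1, i, v⟩))
    (F : Fin r → FreeAlg K X) (G : Set (FreeAlg K X × FreeBimod K X r))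
    (hG : InLab F G) (σ : MonMod X r) :
    (∀ (f : FreeAlg K X) (α : FreeBimod K X r), f = evalS F α →
        sigW α < (σ : WithBot (MonMod X r)) → SRedToZero G (f, α)) ↔
    (∀ (f : FreeAlg K X) (α : FreeBimod K X r), f = evalS F α → f ≠ 0 →
        sigW α < (σ : WithBot (MonMod X r)) → TopSRed G f α) := by
  constructor
  · -- s-reduction to zero implies top s-reducibility
    intro hred f α hf hfne hσ
    obtain ⟨σ', hchain⟩ := hred f α hf hσ
    have key : ∀ (p : FreeAlg K X × FreeBimod K X r),
        Relation.ReflTransGen (SRedStep G) p ((0 : FreeAlg K X), σ') →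
        ∀ w : FreeMonoid X, (∀ u ∈ p.1.coeff.support, u ≤ w) → p.1.coeff w ≠ 0 →
        ∃ g γ, (g, γ) ∈ G ∧ g ≠ 0 ∧ ∃ a b : FreeMonoid X,
          a * lmon g * b = w ∧ WithBot.map (act a b) (sigW γ) ≤ sigW p.2 := by
      intro p hp
      induction hp using Relation.ReflTransGen.head_induction_on with
      | refl =>
        intro w _ hne
        simp at hne
      | @head p p' hstep hrest IH =>
        intro w hsupp hne
        obtain ⟨g, γ, hgG, hg, a, b, hmem, hsig, heq⟩ := hstep
        subst heq
        have htw : a * lmon g * b ≤ w := hsupp _ hmem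
        rcases eq_or_lt_of_le htw with heqw | hlt
        · exact ⟨g, γ, hgG, hg, a, b, heqw, hsig⟩
        · have hcoeff := sredResult_coeff_eq (f := p.1) (g := g) hmon hlt p.2 γ
          have hsupp' := sredResult_supp hmon hsupp htw p.2 γ
          obtain ⟨g', γ', h1, h2, a', b', h3, h4⟩ :=
            IH w hsupp' (by rw [hcoeff]; exact hne)
          exact ⟨g', γ', h1, h2, a', b', h3,
            h4.trans (sredResult_sig hmod hsig p.1 g)⟩
    have hmemf : (f, α).1.coeff (lmon f) ≠ 0 := lcoeff_ne_zero hfne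
    obtain ⟨g, γ, h1, h2, a, b, h3, h4⟩ :=
      key (f, α) hchain (lmon f) (fun u hu => le_lmon hu) hmemf
    exact ⟨g, γ, h1, h2, a, b, h3, h4⟩
  · -- top s-reducibility implies s-reduction to zero
    intro htop f α hf hσ
    have key : ∀ w : FreeMonoid X, ∀ f : FreeAlg K X, ∀ α : FreeBimod K X r,
        f = evalS F α → sigW α < (σ : WithBot (MonMod X r)) → lmon f = w →
        SRedToZero G (f, α) := by
      intro w
      induction w using WellFoundedLT.induction with
      | _ w IH =>
        intro f α hf hσ hw
        by_cases hf0 : f = 0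
        · subst hf0
          exact ⟨α, Relation.ReflTransGen.refl⟩
        · obtain ⟨g, γ, hgG, hg, a, b, htopeq, hsig⟩ := htop f α hf hf0 hσ
          set q := sredResult f α g γ a b with hq
          have hstep : SRedStep G (f, α) q :=
            ⟨g, γ, hgG, hg, a, b, by rw [htopeq]; exact lmon_mem hf0, hsig, rfl⟩
          have hqe : q.1 = evalS F q.2 :=
            sredResult_eval F a b hf ((hG (g, γ) hgG).1)
          have hqs : sigW q.2 ≤ sigW α := sredResult_sig hmod hsig f g
          have hqlt : sigW q.2 < (σ : WithBot (MonMod X r)) := lt_of_le_of_lt hqs hσ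
          by_cases hq0 : q.1 = 0
          · refine ⟨q.2, Relation.ReflTransGen.single ?_⟩
            have hq' : q = ((0 : FreeAlg K X), q.2) := Prod.ext hq0 rfl
            rwa [hq'] at hstep
          · have hlt : lmon q.1 < w := by
              rw [← hw]
              exact sredResult_top hmon hg hf0 htopeq α γ _ (lmon_mem hq0)
            obtain ⟨τ, hτ⟩ := IH (lmon q.1) hlt q.1 q.2 hqe hqlt rfl
            exact ⟨τ, Relation.ReflTransGen.head hstep (by rwa [Prod.mk.eta] at hτ)⟩
    exact key (lmon f) f α hf hσ rfl
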